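/- Let E : ℝ^d → ℝ be convex, differentiable, and supercoercive (E(x)/|x| → ∞ as |x| → ∞), and define the convex conjugate E*(y) = sup_{x ∈ ℝ^d} ( y·x − E(x) ), which is finite for every y ∈ ℝ^d. Let 0 < T < ∞ and u⁰ ∈ ℝ^d, and for v ∈ C¹([0,T]; ℝ^d) with v(0) = u⁰ define G(v) = ∫_0^T ( E(v(t)) + E*(−v'(t)) ) dt + (1/2)|v(T)|² − (1/2)|u⁰|². Then G(v) ≥ 0 for every such v, and G(v) = 0 if and only if v'(t) + ∇E(v(t)) = 0 for all t ∈ [0,T]. -/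

import Mathlib

open scoped RealInnerProductSpace

open Set Filter MeasureTheory intervalIntegral InnerProductSpace Topology

variable {d : ℕ}

local notation "H" => EuclideanSpace ℝ (Fin d)

noncomputable def benConj (E : EuclideanSpace ℝ (Fin d) → ℝ)
    (y : EuclideanSpace ℝ (Fin d)) : ℝ :=
  sSup (Set.range fun x : EuclideanSpace ℝ (Fin d) => ⟪y, x⟫ - E x)

/-- The gradient inequality for convex differentiable functions. -/
lemma ben_grad_ineq {E : H → ℝ} (hconv : ConvexOn ℝ univ E) (hdiff : Differentiable ℝ E)
    (x z : H) : E x + ⟪gradient E x, z - x⟫ ≤ E z := by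
  set L := AffineMap.lineMap (k := ℝ) x z with hL
  set g : ℝ → ℝ := fun s => E (L s) with hg
  have hgconv : ConvexOn ℝ univ g := by
    have h := hconv.comp_affineMap L
    exact h
  have hc : HasDerivAt (fun s : ℝ => L s) (z - x) 0 := by
    have h0 : HasDerivAt (fun s : ℝ => s • (z - x) + x) (z - x) 0 := by
      simpa using ((hasDerivAt_id (0 : ℝ)).smul_const (z - x)).add_const x
    have : (fun s : ℝ => (L s : H)) = fun s : ℝ => s • (z - x) + x := by
      funext s; rw [hL, AffineMap.lineMap_apply_module']
    rw [this]; exact h0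
  have hF : HasFDerivAt E (toDual ℝ _ (gradient E x)) (L 0) := by
    rw [hL, AffineMap.lineMap_apply_zero]
    exact hasGradientAt_iff_hasFDerivAt.1 (hdiff x).hasGradientAt
  have hD : HasDerivAt g (⟪gradient E x, z - x⟫) 0 := by
    have := hF.comp_hasDerivAt 0 hc
    simpa [Function.comp_def, toDual_apply_apply, hg] using this
  have hslope := hgconv.le_slope_of_hasDerivAt (mem_univ (0 : ℝ)) (mem_univ 1) zero_lt_one hD
  have hval : slope g 0 1 = E z - E x := by
    rw [slope_def_field]
    simp [hg, hL, AffineMap.lineMap_apply_one, AffineMap.lineMap_apply_zero]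
  rw [hval] at hslope
  linarith

/-- Fenchel–Young equality at the gradient. -/
lemma ben_conj_grad {E : H → ℝ} (hconv : ConvexOn ℝ univ E) (hdiff : Differentiable ℝ E)
    (hbdd : ∀ y : H, BddAbove (Set.range fun x : H => ⟪y, x⟫ - E x)) (x : H) :
    benConj E (gradient E x) = ⟪gradient E x, x⟫ - E x := by
  apply le_antisymm
  · apply csSup_le (range_nonempty _)
    rintro b ⟨z, rfl⟩
    have h1 := ben_grad_ineq hconv hdiff x z
    have h2 : ⟪gradient E x, z - x⟫ = ⟪gradient E x, z⟫ - ⟪gradient E x, x⟫ :=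
      inner_sub_right _ _ _
    rw [h2] at h1
    show ⟪gradient E x, z⟫ - E z ≤ _
    linarith
  · exact le_csSup (hbdd _) ⟨x, rfl⟩

/-- Fenchel–Young equality implies the dual variable is the gradient. -/
lemma ben_eq_grad {E : H → ℝ} (hdiff : Differentiable ℝ E)
    (hbdd : ∀ y : H, BddAbove (Set.range fun x : H => ⟪y, x⟫ - E x)) (x y : H)
    (heq : E x + benConj E y = ⟪y, x⟫) : y = gradient E x := by
  have hmax : IsLocalMax (fun z : H => ⟪y, z⟫ - E z) x := by
    apply Filter.Eventually.of_forall
    intro z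
    have h1 : ⟪y, z⟫ - E z ≤ benConj E y := le_csSup (hbdd y) ⟨z, rfl⟩
    show ⟪y, z⟫ - E z ≤ ⟪y, x⟫ - E x
    linarith
  have hcoe : ⇑(toDual ℝ (EuclideanSpace ℝ (Fin d)) y) = fun z : H => ⟪y, z⟫ :=
    funext fun z => toDual_apply_apply
  have hF : HasFDerivAt (fun z : H => ⟪y, z⟫ - E z)
      (toDual ℝ _ y - toDual ℝ _ (gradient E x)) x := by
    have h1 : HasFDerivAt (fun z : H => ⟪y, z⟫) (toDual ℝ _ y) x := by
      rw [← hcoe]; exact (toDual ℝ _ y).hasFDerivAt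
    exact h1.sub (hasGradientAt_iff_hasFDerivAt.1 (hdiff x).hasGradientAt)
  have h0 := hmax.hasFDerivAt_eq_zero hF
  rw [sub_eq_zero] at h0
  exact (toDual ℝ _).injective h0

lemma ben_conj_convex {E : H → ℝ}
    (hbdd : ∀ y : H, BddAbove (Set.range fun x : H => ⟪y, x⟫ - E x)) :
    ConvexOn ℝ univ (benConj E) := by
  refine ⟨convex_univ, fun y1 _ y2 _ p q hp hq hpq => ?_⟩
  apply csSup_le (range_nonempty _)
  rintro b ⟨x, rfl⟩
  have h1 : ⟪y1, x⟫ - E x ≤ benConj E y1 := le_csSup (hbdd y1) ⟨x, rfl⟩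
  have h2 : ⟪y2, x⟫ - E x ≤ benConj E y2 := le_csSup (hbdd y2) ⟨x, rfl⟩
  have h3 : ⟪p • y1 + q • y2, x⟫ - E x = p * (⟪y1, x⟫ - E x) + q * (⟪y2, x⟫ - E x) := by
    rw [inner_add_left, real_inner_smul_left, real_inner_smul_left]
    linear_combination (E x) * hpq
  show ⟪p • y1 + q • y2, x⟫ - E x ≤ _
  rw [h3]
  simp only [smul_eq_mul]
  exact add_le_add (mul_le_mul_of_nonneg_left h1 hp) (mul_le_mul_of_nonneg_left h2 hq)

/-- A nonnegative continuous function on `[0,T]` with zero integral vanishes. -/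
lemma ben_zero_of_int_zero {T : ℝ} (hT : 0 < T) {f : ℝ → ℝ}
    (hc : ContinuousOn f (Icc 0 T)) (h0 : ∀ t ∈ Icc (0 : ℝ) T, 0 ≤ f t)
    (hint : ∫ t in (0 : ℝ)..T, f t = 0) : ∀ t ∈ Icc (0 : ℝ) T, f t = 0 := by
  intro t ht
  by_contra hne
  have hpos : 0 < f t := lt_of_le_of_ne (h0 t ht) (Ne.symm hne)
  have hInt : IntervalIntegrable f volume 0 T := by
    have h : ContinuousOn f (uIcc 0 T) := by rwa [uIcc_of_le hT.le]
    exact h.intervalIntegrable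
  have hS : MeasurableSet (Ioc (0 : ℝ) T ∪ Ioc T 0) :=
    measurableSet_Ioc.union measurableSet_Ioc
  have hsub : Ioc (0 : ℝ) T ∪ Ioc T 0 ⊆ Icc 0 T := by
    rw [Ioc_eq_empty (not_lt.2 hT.le), union_empty]
    exact Ioc_subset_Icc_self
  have hnonneg : 0 ≤ᵐ[volume.restrict (Ioc (0 : ℝ) T ∪ Ioc T 0)] f := by
    filter_upwards [ae_restrict_mem hS] with s hs
    exact h0 s (hsub hs)
  have hae := (intervalIntegral.integral_eq_zero_iff_of_nonneg_ae hnonneg hInt).1 hint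
  rw [EventuallyEq, ae_restrict_iff' hS] at hae
  simp only [Pi.zero_apply] at hae
  -- a small ball around t where f > f t / 2
  have hev : ∀ᶠ s in 𝓝[Icc (0 : ℝ) T] t, f t / 2 < f s :=
    (hc t ht).eventually (eventually_gt_nhds (by linarith))
  obtain ⟨δ, hδ, hball⟩ := Metric.mem_nhdsWithin_iff.1 hev
  set α : ℝ := max 0 (t - δ) with hα
  set β : ℝ := min T (t + δ) with hβ
  have hαβ : α < β := by
    rcases ht with ⟨ht0, htT⟩
    apply max_lt <;> apply lt_min <;> [exact hT; linarith; linarith; linarith]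
  have hkey : Ioo α β ⊆ {s | ¬(s ∈ Ioc (0 : ℝ) T ∪ Ioc T 0 → f s = 0)} := by
    intro s hs
    have hs1 : s ∈ Icc (0 : ℝ) T :=
      ⟨le_of_lt (lt_of_le_of_lt (le_max_left _ _) hs.1),
       le_of_lt (lt_of_lt_of_le hs.2 (min_le_left _ _))⟩
    have hs2 : dist s t < δ := by
      rw [Real.dist_eq, abs_lt]
      constructor
      · have := lt_of_le_of_lt (le_max_right _ _) hs.1; linarith
      · have := lt_of_lt_of_le hs.2 (min_le_right _ _); linarith
    have hfs : f t / 2 < f s := hball ⟨Metric.mem_ball.2 hs2, hs1⟩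
    intro hcon
    have hmem : s ∈ Ioc (0 : ℝ) T ∪ Ioc T 0 := by
      left
      exact ⟨lt_of_le_of_lt (le_max_left _ _) hs.1, hs1.2⟩
    have := hcon hmem
    linarith
  have hnull : volume {s : ℝ | ¬(s ∈ Ioc (0 : ℝ) T ∪ Ioc T 0 → f s = 0)} = 0 := hae
  have := measure_mono_null hkey hnull
  rw [Real.volume_Ioo] at this
  exact absurd this (by simp [ENNReal.ofReal_eq_zero]; linarith)

/-- Boundedness of the conjugate sup. -/
lemma ben_bdd {E : H → ℝ} (hE : Continuous E)
    (hsuper : Tendsto (fun x : H => E x / ‖x‖) (Bornology.cobounded _) atTop) (y : H) :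
    BddAbove (Set.range fun x : H => ⟪y, x⟫ - E x) := by
  have h1 : ∀ᶠ x : H in Bornology.cobounded _, ‖y‖ + 1 ≤ E x / ‖x‖ :=
    hsuper.eventually_ge_atTop _
  rw [← comap_norm_atTop, eventually_comap, eventually_atTop] at h1
  obtain ⟨R, hR⟩ := h1
  set R' : ℝ := max R 1 with hR'
  -- bound on the ball
  have hcomp : IsCompact (Metric.closedBall (0 : H) R') := isCompact_closedBall _ _
  have hcont : Continuous fun x : H => ⟪y, x⟫ - E x :=
    (continuous_const.inner continuous_id).sub hE
  obtain ⟨M, hM⟩ := (hcomp.bddAbove_image hcont.continuousOn)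
  refine ⟨max M 0, ?_⟩
  rintro b ⟨x, rfl⟩
  show ⟪y, x⟫ - E x ≤ max M 0
  rcases le_total ‖x‖ R' with hx | hx
  · exact le_max_of_le_left (hM ⟨x, by simpa [Metric.mem_closedBall, dist_eq_norm] using hx, rfl⟩)
  · have hx1 : (1 : ℝ) ≤ ‖x‖ := le_trans (le_max_right _ _) hx
    have hx0 : (0 : ℝ) < ‖x‖ := lt_of_lt_of_le zero_lt_one hx1
    have h2 : ‖y‖ + 1 ≤ E x / ‖x‖ := hR ‖x‖ (le_trans (le_max_left _ _) hx) x rfl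
    have h3 : (‖y‖ + 1) * ‖x‖ ≤ E x := by
      rw [← div_mul_cancel₀ (E x) (ne_of_gt hx0)]
      exact mul_le_mul_of_nonneg_right h2 hx0.le
    have h4 : ⟪y, x⟫ ≤ ‖y‖ * ‖x‖ := real_inner_le_norm y x
    have : ⟪y, x⟫ - E x ≤ -‖x‖ := by nlinarith
    exact le_max_of_le_right (by have h5 := norm_nonneg x; linarith)


/-- Brezis–Ekeland–Nayroles principle. Let `E : ℝ^d → ℝ` be convex,
differentiable and supercoercive, and let `E*(y) = sup_x (y·x − E(x))` be its convex
conjugate. Then `E*` is finite everywhere (the supremum is bounded above) and, for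
`0 < T < ∞`, `a = u⁰ ∈ ℝ^d` and every `v ∈ C¹([0,T];ℝ^d)` (derivative `v'`) with
`v(0) = u⁰`, the functional
`G(v) = ∫_0^T (E(v) + E*(−v')) dt + (1/2)|v(T)|² − (1/2)|u⁰|²`
satisfies `G(v) ≥ 0`, with `G(v) = 0` iff `v' + ∇E(v) = 0` on `[0,T]`. -/
theorem brezis_ekeland_nayroles_principle (d : ℕ) (T : ℝ) (hT : 0 < T)
    (E : EuclideanSpace ℝ (Fin d) → ℝ)
    (hconv : ConvexOn ℝ Set.univ E) (hdiff : Differentiable ℝ E)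
    (hsuper : Filter.Tendsto (fun x : EuclideanSpace ℝ (Fin d) => E x / ‖x‖)
      (Bornology.cobounded _) Filter.atTop)
    (a : EuclideanSpace ℝ (Fin d)) :
    (∀ y : EuclideanSpace ℝ (Fin d),
        BddAbove (Set.range fun x : EuclideanSpace ℝ (Fin d) => ⟪y, x⟫ - E x))
      ∧ ∀ v v' : ℝ → EuclideanSpace ℝ (Fin d),
          (∀ t ∈ Set.Icc (0 : ℝ) T, HasDerivWithinAt v (v' t) (Set.Icc 0 T) t) →
          ContinuousOn v' (Set.Icc 0 T) → v 0 = a →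
          (0 ≤ (∫ t in (0 : ℝ)..T, (E (v t)
                  + sSup (Set.range fun x : EuclideanSpace ℝ (Fin d) => ⟪-v' t, x⟫ - E x)))
                + (1 / 2) * ‖v T‖ ^ 2 - (1 / 2) * ‖a‖ ^ 2
            ∧ ((∫ t in (0 : ℝ)..T, (E (v t)
                  + sSup (Set.range fun x : EuclideanSpace ℝ (Fin d) => ⟪-v' t, x⟫ - E x)))
                + (1 / 2) * ‖v T‖ ^ 2 - (1 / 2) * ‖a‖ ^ 2 = 0
              ↔ ∀ t ∈ Set.Icc (0 : ℝ) T, v' t + gradient E (v t) = 0)) := by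
  have hbdd : ∀ y : EuclideanSpace ℝ (Fin d),
      BddAbove (Set.range fun x : EuclideanSpace ℝ (Fin d) => ⟪y, x⟫ - E x) :=
    ben_bdd hdiff.continuous hsuper
  refine ⟨hbdd, fun v v' hv hv'c hv0 => ?_⟩
  have hvcont : ContinuousOn v (Icc 0 T) := fun t ht => (hv t ht).continuousWithinAt
  have hconjcont : Continuous (benConj E) := by
    have h := (ben_conj_convex hbdd).continuousOn isOpen_univ
    rwa [continuousOn_univ] at h
  set f : ℝ → ℝ := fun t => E (v t) + benConj E (-v' t) + ⟪v' t, v t⟫ with hfdef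
  have hg1cont : ContinuousOn (fun t => E (v t) + benConj E (-v' t)) (Icc 0 T) :=
    (hdiff.continuous.comp_continuousOn hvcont).add
      (hconjcont.comp_continuousOn hv'c.neg)
  have hg2cont : ContinuousOn (fun t => ⟪v' t, v t⟫) (Icc 0 T) := hv'c.inner hvcont
  have hfcont : ContinuousOn f (Icc 0 T) := hg1cont.add hg2cont
  have hint1 : IntervalIntegrable (fun t => E (v t) + benConj E (-v' t)) volume 0 T := by
    have h : ContinuousOn (fun t => E (v t) + benConj E (-v' t)) (uIcc 0 T) := by
      rwa [uIcc_of_le hT.le]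
    exact h.intervalIntegrable
  have hint2 : IntervalIntegrable (fun t => ⟪v' t, v t⟫) volume 0 T := by
    have h : ContinuousOn (fun t => ⟪v' t, v t⟫) (uIcc 0 T) := by
      rwa [uIcc_of_le hT.le]
    exact h.intervalIntegrable
  have hFTC : (∫ t in (0:ℝ)..T, ⟪v' t, v t⟫)
      = (1/2) * ‖v T‖^2 - (1/2) * ‖v 0‖^2 := by
    have hφcont : ContinuousOn (fun t => (1/2 : ℝ) * ‖v t‖^2) (Icc 0 T) :=
      continuousOn_const.mul (hvcont.norm.pow 2)
    have hder : ∀ x ∈ Ioo (0:ℝ) T,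
        HasDerivWithinAt (fun t => (1/2:ℝ) * ‖v t‖^2) (⟪v' x, v x⟫) (Ioi x) x := by
      intro x hx
      have hvx : HasDerivAt v (v' x) x :=
        (hv x (Ioo_subset_Icc_self hx)).hasDerivAt (Icc_mem_nhds hx.1 hx.2)
      have h1 : HasDerivAt (fun t => ⟪v t, v t⟫) (⟪v x, v' x⟫ + ⟪v' x, v x⟫) x :=
        hvx.inner ℝ hvx
      have h2 : HasDerivAt (fun t => (1/2:ℝ) * ⟪v t, v t⟫)
          ((1/2:ℝ) * (⟪v x, v' x⟫ + ⟪v' x, v x⟫)) x := h1.const_mul _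
      have h3 : (fun t => (1/2:ℝ) * ⟪v t, v t⟫) = fun t => (1/2:ℝ) * ‖v t‖^2 := by
        funext s; rw [real_inner_self_eq_norm_sq]
      have h4 : (1/2:ℝ) * (⟪v x, v' x⟫ + ⟪v' x, v x⟫) = ⟪v' x, v x⟫ := by
        rw [real_inner_comm (v x) (v' x)]; ring
      rw [h3, h4] at h2
      exact h2.hasDerivWithinAt
    exact intervalIntegral.integral_eq_sub_of_hasDeriv_right_of_le hT.le hφcont hder hint2
  have hsplit : (∫ t in (0:ℝ)..T, f t)
      = (∫ t in (0:ℝ)..T, (E (v t) + benConj E (-v' t))) + ∫ t in (0:ℝ)..T, ⟪v' t, v t⟫ :=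
    intervalIntegral.integral_add hint1 hint2
  have hGf : (∫ t in (0 : ℝ)..T, (E (v t) + benConj E (-v' t)))
      + (1 / 2) * ‖v T‖ ^ 2 - (1 / 2) * ‖a‖ ^ 2 = ∫ t in (0:ℝ)..T, f t := by
    rw [hsplit, hFTC, hv0]; ring
  have hfnonneg : ∀ t ∈ Icc (0:ℝ) T, 0 ≤ f t := by
    intro t ht
    have h1 : ⟪-v' t, v t⟫ - E (v t) ≤ benConj E (-v' t) := le_csSup (hbdd _) ⟨v t, rfl⟩
    rw [inner_neg_left] at h1
    show 0 ≤ E (v t) + benConj E (-v' t) + ⟪v' t, v t⟫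
    linarith
  have main1 : 0 ≤ (∫ t in (0 : ℝ)..T, (E (v t) + benConj E (-v' t)))
      + (1 / 2) * ‖v T‖ ^ 2 - (1 / 2) * ‖a‖ ^ 2 := by
    rw [hGf]
    exact intervalIntegral.integral_nonneg hT.le hfnonneg
  have main2 : (∫ t in (0 : ℝ)..T, (E (v t) + benConj E (-v' t)))
      + (1 / 2) * ‖v T‖ ^ 2 - (1 / 2) * ‖a‖ ^ 2 = 0
      ↔ ∀ t ∈ Icc (0:ℝ) T, v' t + gradient E (v t) = 0 := by
    rw [hGf]
    constructor
    · intro h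
      have hzero := ben_zero_of_int_zero hT hfcont hfnonneg h
      intro t ht
      have h1 : E (v t) + benConj E (-v' t) + ⟪v' t, v t⟫ = 0 := hzero t ht
      have h2 : E (v t) + benConj E (-v' t) = ⟪-v' t, v t⟫ := by
        rw [inner_neg_left]; linarith
      have h3 := ben_eq_grad hdiff hbdd (v t) (-v' t) h2
      rw [← h3]
      simp
    · intro h
      have hfz : EqOn f 0 (uIcc (0:ℝ) T) := by
        rw [uIcc_of_le hT.le]
        intro t ht
        have hg : gradient E (v t) = -v' t := eq_neg_of_add_eq_zero_right (h t ht)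
        show E (v t) + benConj E (-v' t) + ⟪v' t, v t⟫ = 0
        rw [← hg, ben_conj_grad hconv hdiff hbdd, hg, inner_neg_left]
        ring
      rw [intervalIntegral.integral_congr hfz]
      simp
  exact ⟨main1, main2⟩
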